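/- Let W_x ∈ ℝ^{n×n} with ‖W_x‖ < 1 and W_in ∈ ℝ^{n×m}, and define the Echo State Network state map f(x, ω) = tanh(W_x x + W_in ω). Then for every input sequence ω : ℕ → ℝᵐ and all initial states x₀, x₀' ∈ ℝⁿ, the difference of the corresponding trajectories converges to zero: ‖x(k, x₀, ω) − x(k, x₀', ω)‖₂ → 0 as k → ∞. -/

import Mathlib

open Matrix
open scoped Matrix.Norms.L2Operator

lemma tanh_hasDerivAt (x : ℝ) : HasDerivAt Real.tanh (1 / Real.cosh x ^ 2) x := by
  have h := (Real.hasDerivAt_sinh x).div (Real.hasDerivAt_cosh x) (Real.cosh_pos x).ne'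
  have heq : (Real.cosh x * Real.cosh x - Real.sinh x * Real.sinh x) / Real.cosh x ^ 2
      = 1 / Real.cosh x ^ 2 := by
    rw [show Real.cosh x * Real.cosh x - Real.sinh x * Real.sinh x
        = Real.cosh x ^ 2 - Real.sinh x ^ 2 by ring, Real.cosh_sq_sub_sinh_sq]
  rw [heq] at h
  have e : Real.tanh = Real.sinh / Real.cosh := by
    funext y
    exact Real.tanh_eq_sinh_div_cosh y
  rw [e]
  exact h

lemma tanh_lipschitz : LipschitzWith 1 Real.tanh := by
  apply lipschitzWith_of_nnnorm_deriv_le (fun x => (tanh_hasDerivAt x).differentiableAt)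
  intro x
  rw [(tanh_hasDerivAt x).deriv]
  rw [← NNReal.coe_le_coe, coe_nnnorm, NNReal.coe_one, Real.norm_eq_abs]
  have h1 : (1 : ℝ) ≤ Real.cosh x := Real.one_le_cosh x
  have h2 : (1 : ℝ) ≤ Real.cosh x ^ 2 := by nlinarith
  rw [abs_of_nonneg (by positivity)]
  rw [div_le_one (by positivity)]
  exact h2

theorem esn_trajectories_converge {n m : ℕ}
    (Wx : Matrix (Fin n) (Fin n) ℝ) (Win : Matrix (Fin n) (Fin m) ℝ)
    (hW : ‖Wx‖ < 1)
    (ω : ℕ → EuclideanSpace ℝ (Fin m)) (x x' : ℕ → EuclideanSpace ℝ (Fin n))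
    (hx : ∀ k, x (k + 1) =
      (WithLp.toLp 2 (fun i => Real.tanh ((Matrix.toEuclideanLin Wx (x k) + Matrix.toEuclideanLin Win (ω k)) i)) :
        EuclideanSpace ℝ (Fin n)))
    (hx' : ∀ k, x' (k + 1) =
      (WithLp.toLp 2 (fun i => Real.tanh ((Matrix.toEuclideanLin Wx (x' k) + Matrix.toEuclideanLin Win (ω k)) i)) :
        EuclideanSpace ℝ (Fin n))) :
    Filter.Tendsto (fun k => ‖x k - x' k‖) Filter.atTop (nhds 0) := by
  have hWnn : 0 ≤ ‖Wx‖ := norm_nonneg _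
  -- one-step contraction
  have key : ∀ k, ‖x (k + 1) - x' (k + 1)‖ ≤ ‖Wx‖ * ‖x k - x' k‖ := by
    intro k
    set u : EuclideanSpace ℝ (Fin n) :=
      Matrix.toEuclideanLin Wx (x k) + Matrix.toEuclideanLin Win (ω k) with hu
    set v : EuclideanSpace ℝ (Fin n) :=
      Matrix.toEuclideanLin Wx (x' k) + Matrix.toEuclideanLin Win (ω k) with hv
    have step1 : ‖x (k + 1) - x' (k + 1)‖ ≤ ‖u - v‖ := by
      rw [hx k, hx' k]
      rw [EuclideanSpace.norm_eq, EuclideanSpace.norm_eq]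
      apply Real.sqrt_le_sqrt
      apply Finset.sum_le_sum
      intro i _
      have : ‖Real.tanh (u i) - Real.tanh (v i)‖ ≤ ‖u i - v i‖ := by
        have := tanh_lipschitz.dist_le_mul (u i) (v i)
        simpa [dist_eq_norm] using this
      show ‖Real.tanh (u i) - Real.tanh (v i)‖ ^ 2 ≤ ‖u i - v i‖ ^ 2
      gcongr
    have huv : u - v = Matrix.toEuclideanLin Wx (x k - x' k) := by
      rw [hu, hv, map_sub]
      abel
    have step2 : ‖u - v‖ ≤ ‖Wx‖ * ‖x k - x' k‖ := by
      rw [huv]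
      have h := (Matrix.toEuclideanLin.trans LinearMap.toContinuousLinearMap Wx).le_opNorm
        (x k - x' k)
      rw [← Matrix.l2_opNorm_def] at h
      exact h
    exact step1.trans step2
  -- geometric bound
  have bound : ∀ k, ‖x k - x' k‖ ≤ ‖Wx‖ ^ k * ‖x 0 - x' 0‖ := by
    intro k
    induction k with
    | zero => simp
    | succ k ih =>
      calc ‖x (k + 1) - x' (k + 1)‖ ≤ ‖Wx‖ * ‖x k - x' k‖ := key k
        _ ≤ ‖Wx‖ * (‖Wx‖ ^ k * ‖x 0 - x' 0‖) := by gcongr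
        _ = ‖Wx‖ ^ (k + 1) * ‖x 0 - x' 0‖ := by ring
  have hgeo : Filter.Tendsto (fun k => ‖Wx‖ ^ k * ‖x 0 - x' 0‖) Filter.atTop (nhds 0) := by
    have := tendsto_pow_atTop_nhds_zero_of_lt_one hWnn hW
    simpa using this.mul_const ‖x 0 - x' 0‖
  exact squeeze_zero (fun k => norm_nonneg _) bound hgeo
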